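/- The Catalan transform satisfies the reversal identity: for n ≥ 1, Σ_{k=0}^{n} (k/(2n−k)) · binomial(2n−k, n−k) · a_k = Σ_{k=0}^{n−1} C_k^(n−1−k) · a_{n−k} for any sequence (a_m), where C_k^(j) = ((j+1)/(2k+j+1)) · binomial(2k+j+1, k). -/

import Mathlib

def gc (n k : ℕ) : ℚ := ((k : ℚ) + 1) / (2 * (n : ℚ) + (k : ℚ) + 1) * ((2 * n + k + 1).choose n : ℚ)

def cat (n : ℕ) : ℚ := 1 / ((n : ℚ) + 1) * ((2 * n).choose n : ℚ)

def Cond {n : ℕ} (u : Fin n → ℕ) : Prop :=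
  ∀ i j : Fin n, i < j →
    ¬(1 ≤ (u j : ℤ) - (((j : ℕ) : ℤ) - ((i : ℕ) : ℤ)) ∧
      (u j : ℤ) - (((j : ℕ) : ℤ) - ((i : ℕ) : ℤ)) ≤ (u i : ℤ) - 1)

theorem stmt13 (n : ℕ) (hn : 1 ≤ n) (a : ℕ → ℚ) :
    ∑ k ∈ Finset.range (n + 1),
        (k : ℚ) / ((2 * n - k : ℕ) : ℚ) * ((2 * n - k).choose (n - k) : ℚ) * a k
      = ∑ k ∈ Finset.range n, gc k (n - 1 - k) * a (n - k) := by
  rw [Finset.sum_range_succ', ← Finset.sum_range_reflect (fun k => gc k (n - 1 - k) * a (n - k)) n]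
  simp only [Nat.cast_zero, zero_div, zero_mul, add_zero]
  refine Finset.sum_congr rfl fun k hk => ?_
  have hk' : k < n := Finset.mem_range.mp hk
  have h1 : n - 1 - (n - 1 - k) = k := by omega
  have h2 : n - (n - 1 - k) = k + 1 := by omega
  have h3 : 2 * (n - 1 - k) + k + 1 = 2 * n - (k + 1) := by omega
  have h4 : n - 1 - k = n - (k + 1) := by omega
  simp only [gc, h1, h2]
  have hc : ((2 * (n - 1 - k) + k + 1).choose (n - 1 - k) : ℚ)
      = ((2 * n - (k + 1)).choose (n - (k + 1)) : ℚ) := by rw [h3, h4]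
  have hd : 2 * ((n - 1 - k : ℕ) : ℚ) + (k : ℚ) + 1 = ((2 * n - (k + 1) : ℕ) : ℚ) := by
    rw [← h3]; push_cast [h3]; rw [← h3]; push_cast; ring
  rw [hc, hd]
  push_cast
  ring
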